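/- The potential satisfies the recursion y(v) = min over neighbors u of v of max{ℓ(vu) + y(u), s_v^{-vu}} for every vertex v ≠ t, where y(t) = 0. -/

import Mathlib

open scoped ENNReal

noncomputable section

/-- The length of a walk w.r.t. edge weights `ℓ`. -/
def wlen {V : Type*} {G : SimpleGraph V} (ℓ : Sym2 V → ℝ≥0∞) {u v : V} (p : G.Walk u v) : ℝ≥0∞ :=
  (p.edges.map ℓ).sum

/-- Weighted shortest-path distance in `G`. -/
def wdist {V : Type*} (G : SimpleGraph V) (ℓ : Sym2 V → ℝ≥0∞) (u v : V) : ℝ≥0∞ :=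
  ⨅ p : G.Walk u v, wlen ℓ p

/-- `s_u^{-e}`: the shortest `u`-`t` distance in `G` with edge `e` removed. -/
def sval {V : Type*} (G : SimpleGraph V) (ℓ : Sym2 V → ℝ≥0∞) (t : V) (e : Sym2 V) (u : V) :
    ℝ≥0∞ :=
  wdist (G.deleteEdges {e}) ℓ u t

/-- The supremum, over edges `uu'` of the walk (u nearer the start), of
`ℓ(P[v,u]) + s_u^{-uu'}`. -/
def detourSup {V : Type*} (G : SimpleGraph V) (ℓ : Sym2 V → ℝ≥0∞) (t : V) :
    ∀ {v : V}, G.Walk v t → ℝ≥0∞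
  | _, SimpleGraph.Walk.nil => 0
  | v, @SimpleGraph.Walk.cons _ _ _ w _ _h p =>
      max (sval G ℓ t s(v, w) v) (ℓ s(v, w) + detourSup G ℓ t p)

/-- The robust length `Val(P)` of a `v`-`t` walk `P`. -/
def rVal {V : Type*} (G : SimpleGraph V) (ℓ : Sym2 V → ℝ≥0∞) (t : V) {v : V}
    (p : G.Walk v t) : ℝ≥0∞ :=
  max (wlen ℓ p) (detourSup G ℓ t p)

/-- The potential `y(v)`: minimum robust length over all simple `v`-`t` paths. -/
def pot {V : Type*} (G : SimpleGraph V) (ℓ : Sym2 V → ℝ≥0∞) (t v : V) : ℝ≥0∞ :=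
  ⨅ p : {p : G.Walk v t // p.IsPath}, rVal G ℓ t p.1


section Aux
open SimpleGraph
set_option linter.unusedSectionVars false

variable {V : Type*} [DecidableEq V] {G : SimpleGraph V} (ℓ : Sym2 V → ℝ≥0∞) (t : V)

private lemma wlen_cons {v u : V} (h : G.Adj v u) (q : G.Walk u t) :
    wlen ℓ (SimpleGraph.Walk.cons h q) = ℓ s(v, u) + wlen ℓ q := by
  simp [wlen]

private lemma add_max' (a b c : ℝ≥0∞) : a + max b c = max (a + b) (a + c) :=
  (max_add_add_left a b c).symm

private lemma rVal_cons (G : SimpleGraph V) {v u : V} (h : G.Adj v u) (q : G.Walk u t) :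
    rVal G ℓ t (SimpleGraph.Walk.cons h q) =
      max (ℓ s(v, u) + rVal G ℓ t q) (sval G ℓ t s(v, u) v) := by
  simp only [rVal, detourSup, wlen_cons, add_max']
  rw [max_left_comm, max_comm]

private lemma wlen_append {u v : V} (p : G.Walk u v) (q : G.Walk v t) :
    wlen ℓ (p.append q) = wlen ℓ p + wlen ℓ q := by
  simp [wlen, SimpleGraph.Walk.edges_append]

private lemma le_detourSup_append (G : SimpleGraph V) {u v : V} (p : G.Walk u v)
    (q : G.Walk v t) : detourSup G ℓ t q ≤ detourSup G ℓ t (p.append q) := by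
  induction p with
  | nil => simp [SimpleGraph.Walk.nil_append]
  | cons h p ih =>
      rw [SimpleGraph.Walk.cons_append]
      simp only [detourSup]
      exact le_trans (le_trans (ih q) le_add_self) (le_max_right _ _)
  
private lemma rVal_suffix_le (G : SimpleGraph V) {u v : V} (p : G.Walk u v)
    (q : G.Walk v t) : rVal G ℓ t q ≤ rVal G ℓ t (p.append q) := by
  apply max_le_max
  · rw [wlen_append]; exact le_add_self
  · exact le_detourSup_append ℓ t G p q

end Aux

/-- The potential satisfies the recursion
`y(v) = min over neighbors u of v of max{ℓ(vu) + y(u), s_v^{-vu}}` for every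
vertex `v ≠ t`, where `y(t) = 0`; here `G` is 2-edge-connected towards `t`, i.e.
`t` stays reachable from every vertex after deleting any single edge. -/


theorem potential_recursion {V : Type*} [Fintype V] [DecidableEq V]
    (G : SimpleGraph V) (ℓ : Sym2 V → ℝ≥0∞) (t : V)
    (h2ec : ∀ (e : Sym2 V) (v : V), (G.deleteEdges {e}).Reachable v t) :
    pot G ℓ t t = 0 ∧
    ∀ v : V, v ≠ t →
      pot G ℓ t v =
        ⨅ (u : V) (_ : G.Adj v u),
          max (ℓ s(v, u) + pot G ℓ t u) (sval G ℓ t s(v, u) v) := by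
  constructor
  · refine le_antisymm ?_ zero_le
    refine le_trans (iInf_le _ ⟨SimpleGraph.Walk.nil, SimpleGraph.Walk.IsPath.nil⟩) ?_
    simp [rVal, wlen, detourSup]
  · intro v hv
    refine le_antisymm ?_ ?_
    · refine le_iInf fun u => le_iInf fun hadj => ?_
      have key : ∀ q : {q : G.Walk u t // q.IsPath},
          pot G ℓ t v ≤ max (ℓ s(v, u) + rVal G ℓ t q.1) (sval G ℓ t s(v, u) v) := by
        rintro ⟨q, hq⟩
        by_cases hmem : v ∈ q.support
        · refine le_trans (iInf_le _ ⟨q.dropUntil v hmem, hq.dropUntil hmem⟩) ?_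
          refine le_trans ?_ (le_max_left _ _)
          refine le_trans ?_ (le_add_self)
          calc rVal G ℓ t (q.dropUntil v hmem)
              ≤ rVal G ℓ t ((q.takeUntil v hmem).append (q.dropUntil v hmem)) :=
                rVal_suffix_le ℓ t G _ _
            _ = rVal G ℓ t q := by rw [SimpleGraph.Walk.take_spec]
        · refine le_trans (iInf_le _ ⟨SimpleGraph.Walk.cons hadj q, hq.cons hmem⟩) ?_
          rw [rVal_cons]
      refine le_trans (le_iInf key) ?_
      rw [pot, ENNReal.add_iInf]
      rw [iInf_sup_eq]
    · refine le_iInf ?_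
      rintro ⟨p, hp⟩
      cases p with
      | nil => exact absurd rfl hv
      | @cons _ u _ hadj q =>
          rw [rVal_cons]
          exact le_trans (iInf₂_le u hadj)
            (max_le_max (add_le_add le_rfl (iInf_le (fun q : {q : G.Walk u t // q.IsPath} => rVal G ℓ t q.1) ⟨q, hp.of_cons⟩)) le_rfl)
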